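/- arXiv:2001.06474 — 2 statements merged into one kernel-verified Lean document; each statement's English description precedes it below -/
import Mathlib

section
/- Let x ≥ 0 in ℝⁿ, g = ∇f(x), and I₊ = {i : x_i = 0 and g_i > 0} the binding set. Let P be symmetric positive definite and define P̄ by P̄_{ij} = P_{ij} if i,j ∉ I₊ and P̄_{ij} = 0 otherwise. If x is not a stationary point of min f over {x ≥ 0} (i.e., g_F ≠ 0 where g_F is the restriction of g to indices outside I₊), then d = −P̄·g satisfies gᵀ·d < 0. -/
open Matrix
open scoped Classical

theorem stmt4 {n : ℕ} (f : (Fin n → ℝ) → ℝ) (hf : Differentiable ℝ f)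
    (x g : Fin n → ℝ) (hx : ∀ i, 0 ≤ x i)
    (hg : ∀ v, fderiv ℝ f x v = g ⬝ᵥ v)
    (P : Matrix (Fin n) (Fin n) ℝ) (hP : P.PosDef)
    (Pbar : Matrix (Fin n) (Fin n) ℝ)
    (hPbar : ∀ i j, Pbar i j =
      if ¬(x i = 0 ∧ 0 < g i) ∧ ¬(x j = 0 ∧ 0 < g j) then P i j else 0)
    (hgF : ∃ i, ¬(x i = 0 ∧ 0 < g i) ∧ g i ≠ 0) :
    g ⬝ᵥ (-(Pbar.mulVec g)) < 0 := by
  set u : Fin n → ℝ := fun i => if ¬(x i = 0 ∧ 0 < g i) then g i else 0 with hu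
  have hune : u ≠ 0 := by
    obtain ⟨i, hi, hgi⟩ := hgF
    intro h
    have h2 := congrFun h i
    rw [hu] at h2
    simp only at h2
    rw [if_pos hi] at h2
    exact hgi h2
  have hpos : 0 < u ⬝ᵥ P.mulVec u := by
    have := hP.dotProduct_mulVec_pos hune
    simpa using this
  have key : g ⬝ᵥ Pbar.mulVec g = u ⬝ᵥ P.mulVec u := by
    unfold dotProduct mulVec
    simp only [dotProduct]
    apply Finset.sum_congr rfl
    intro i _
    by_cases hi : ¬(x i = 0 ∧ 0 < g i)
    · have hui : u i = g i := by rw [hu]; exact if_pos hi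
      rw [hui]
      congr 1
      apply Finset.sum_congr rfl
      intro j _
      by_cases hj : ¬(x j = 0 ∧ 0 < g j)
      · have huj : u j = g j := by rw [hu]; exact if_pos hj
        rw [huj, hPbar, if_pos ⟨hi, hj⟩]
      · have huj : u j = 0 := by rw [hu]; exact if_neg hj
        rw [huj, hPbar, if_neg (by tauto)]; ring
    · have hui : u i = 0 := by rw [hu]; exact if_neg hi
      rw [hui]
      have : ∀ j, Pbar i j = 0 := by
        intro j; rw [hPbar]; simp [hi]
      simp [this]
  have : g ⬝ᵥ Pbar.mulVec g > 0 := key ▸ hpos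
  rw [dotProduct_neg]
  linarith
end

section
/- If B₀ = θ̄·P⁻¹ with θ̄ > 0 and P = C·Cᵀ for invertible C, then Cᵀ·B₀·C = θ̄·I. More generally, if B' is the compact L-BFGS matrix built in the scaled space with initial matrix θ̄·I and pairs (C⁻¹s_i, Cᵀy_i), and B is the compact L-BFGS matrix built in the original space with initial matrix θ̄·P⁻¹ and pairs (s_i, y_i), then B' = Cᵀ·B·C. -/
open Matrix

/-- The compact L-BFGS matrix `B = B₀ − W·M·Wᵀ` built from initial matrix `B₀`
and pair matrices `S`, `Y`, with `W = [Y, B₀S]` and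
`M = [[−D, Lᵀ],[L, SᵀB₀S]]⁻¹` where `D` is the diagonal of `SᵀY` and `L` its
strict lower triangle. -/
noncomputable def lbfgsCompact {n m : ℕ} (B₀ : Matrix (Fin n) (Fin n) ℝ)
    (S Y : Matrix (Fin n) (Fin m) ℝ) : Matrix (Fin n) (Fin n) ℝ :=
  let D := Matrix.diagonal (fun i => (Sᵀ * Y) i i)
  let L := Matrix.of (fun i j : Fin m => if (j : ℕ) < (i : ℕ) then (Sᵀ * Y) i j else 0)
  let W := Matrix.fromCols Y (B₀ * S)
  B₀ - W * (Matrix.fromBlocks (-D) Lᵀ L (Sᵀ * B₀ * S))⁻¹ * Wᵀ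

theorem stmt12 {n m : ℕ} (C : Matrix (Fin n) (Fin n) ℝ) (hC : IsUnit C.det)
    (θ : ℝ) (hθ : 0 < θ) (S Y : Matrix (Fin n) (Fin m) ℝ) :
    Cᵀ * (θ • (C * Cᵀ)⁻¹) * C = θ • (1 : Matrix (Fin n) (Fin n) ℝ) ∧
    lbfgsCompact (θ • (1 : Matrix (Fin n) (Fin n) ℝ)) (C⁻¹ * S) (Cᵀ * Y)
      = Cᵀ * lbfgsCompact (θ • (C * Cᵀ)⁻¹) S Y * C := by
  have hCT : IsUnit Cᵀ.det := by rwa [Matrix.det_transpose]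
  have hinv : (C * Cᵀ)⁻¹ = Cᵀ⁻¹ * C⁻¹ := Matrix.mul_inv_rev C Cᵀ
  have h1 : Cᵀ * (θ • (C * Cᵀ)⁻¹) * C = θ • (1 : Matrix (Fin n) (Fin n) ℝ) := by
    rw [hinv, Matrix.mul_smul, Matrix.smul_mul]
    congr 1
    rw [← Matrix.mul_assoc, Matrix.mul_nonsing_inv _ hCT, Matrix.one_mul, Matrix.nonsing_inv_mul _ hC]
  refine ⟨h1, ?_⟩
  have hST : (C⁻¹ * S)ᵀ * (Cᵀ * Y) = Sᵀ * Y := by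
    rw [Matrix.transpose_mul, Matrix.mul_assoc, ← Matrix.mul_assoc (C⁻¹)ᵀ,
      Matrix.transpose_nonsing_inv, Matrix.nonsing_inv_mul _ hCT, Matrix.one_mul]
  have hW : (θ • (1 : Matrix (Fin n) (Fin n) ℝ)) * (C⁻¹ * S)
      = Cᵀ * ((θ • (C * Cᵀ)⁻¹) * S) := by
    rw [hinv, Matrix.smul_mul, Matrix.smul_mul, Matrix.mul_smul, Matrix.one_mul]
    congr 1
    rw [← Matrix.mul_assoc, ← Matrix.mul_assoc, Matrix.mul_nonsing_inv _ hCT,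
      Matrix.one_mul]
  have hSBS : (C⁻¹ * S)ᵀ * (θ • (1 : Matrix (Fin n) (Fin n) ℝ)) * (C⁻¹ * S)
      = Sᵀ * (θ • (C * Cᵀ)⁻¹) * S := by
    rw [hinv, Matrix.transpose_mul, Matrix.transpose_nonsing_inv, Matrix.mul_smul,
      Matrix.mul_smul, Matrix.smul_mul, Matrix.smul_mul, Matrix.mul_one]
    simp only [Matrix.mul_assoc, Matrix.transpose_transpose]
  simp only [lbfgsCompact]
  rw [hST, hW, hSBS, Matrix.mul_sub, Matrix.sub_mul, h1]
  congr 1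
  rw [← Matrix.mul_fromCols, Matrix.transpose_mul]
  simp only [Matrix.mul_assoc, Matrix.transpose_transpose]
end
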